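/- Fix real parameters γ, α with γ > 1 and α > 0, real constants b̃₁₃, b̃₁₄, and let P = diag(α², (γ−1)/2, (γ−1)/2, 1). For Φ = (φ₁,φ₂,φ₃,φ₄) ∈ ℝ⁴ with φ₁ ≠ 0 set u = φ₂/φ₁, v = φ₃/φ₁ and define the 4×4 matrices B(Φ) = (1/2)·[[v,0,1,0],[−uv, 2v, u, 0],[−v², 0, 3v, 4φ₄/φ₁],[−γv φ₄/φ₁, 0, γ φ₄/φ₁, 2v]] and B̃(Φ) = [[α²v, 0, b̃₁₃φ₃, b̃₁₄φ₄],[0, ((γ−1)/2)v, 0, 0],[−2b̃₁₃φ₃, 0, b̃₁₃φ₁ + ((γ−1)/2)v, 0],[−2b̃₁₄φ₄, 0, 2(γ−1)φ₄/φ₁, b̃₁₄φ₁ + (2−γ)v]]. Then for every differentiable function Φ : ℝ → ℝ⁴ with φ₁(y) ≠ 0 for all y, the identity (d/dy)( B̃(Φ(y)) Φ(y) ) + B̃(Φ(y))ᵀ Φ'(y) = 2 P B(Φ(y)) Φ'(y) holds for all y. -/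

import Mathlib

open Matrix

set_option maxHeartbeats 2000000

/-- The diagonal norm matrix `P = diag(α², (γ−1)/2, (γ−1)/2, 1)`. -/
noncomputable def normP (γ α : ℝ) : Matrix (Fin 4) (Fin 4) ℝ :=
  Matrix.diagonal ![α ^ 2, (γ - 1) / 2, (γ - 1) / 2, 1]

/-- The `y`-direction coefficient matrix `B(Φ)` of the transformed Euler equations. -/
noncomputable def matB (γ : ℝ) (φ : Fin 4 → ℝ) : Matrix (Fin 4) (Fin 4) ℝ :=
  let u := φ 1 / φ 0
  let v := φ 2 / φ 0
  let q := φ 3 / φ 0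
  (1 / 2 : ℝ) • !![v, 0, 1, 0;
                   -(u * v), 2 * v, u, 0;
                   -v ^ 2, 0, 3 * v, 4 * q;
                   -(γ * v * q), 0, γ * q, 2 * v]

/-- The derived matrix `B̃(Φ)` (with free parameters `b̃₁₃, b̃₁₄`). -/
noncomputable def matBtil (γ α b13 b14 : ℝ) (φ : Fin 4 → ℝ) : Matrix (Fin 4) (Fin 4) ℝ :=
  let v := φ 2 / φ 0
  let q := φ 3 / φ 0
  !![α ^ 2 * v, 0, b13 * φ 2, b14 * φ 3;
     0, (γ - 1) / 2 * v, 0, 0;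
     -(2 * b13 * φ 2), 0, b13 * φ 0 + (γ - 1) / 2 * v, 0;
     -(2 * b14 * φ 3), 0, 2 * (γ - 1) * q, b14 * φ 0 + (2 - γ) * v]

/-- **Task 3, y-direction:** the matrices `B̃(Φ)` and `P` solve the system of ODE relations
`(B̃ Φ)_y + B̃ᵀ Φ_y = 2 P B Φ_y` along any differentiable curve `Φ` with `φ₁ ≠ 0`. -/
theorem stmt_5 (γ α b13 b14 : ℝ) (hγ : 1 < γ) (hα : 0 < α)
    (Φ : ℝ → Fin 4 → ℝ) (hΦ : Differentiable ℝ Φ) (hφ1 : ∀ y, Φ y 0 ≠ 0) :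
    ∀ y, deriv (fun s => (matBtil γ α b13 b14 (Φ s)).mulVec (Φ s)) y
        + (matBtil γ α b13 b14 (Φ y))ᵀ.mulVec (deriv Φ y)
      = (2 : ℝ) • ((normP γ α * matB γ (Φ y)).mulVec (deriv Φ y)) := by
  intro y
  have hA : Φ y 0 ≠ 0 := hφ1 y
  have hd : HasDerivAt Φ (deriv Φ y) y := (hΦ y).hasDerivAt
  have h0 : HasDerivAt (fun s => Φ s 0) (deriv Φ y 0) y := hasDerivAt_pi.mp hd 0
  have h1 : HasDerivAt (fun s => Φ s 1) (deriv Φ y 1) y := hasDerivAt_pi.mp hd 1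
  have h2 : HasDerivAt (fun s => Φ s 2) (deriv Φ y 2) y := hasDerivAt_pi.mp hd 2
  have h3 : HasDerivAt (fun s => Φ s 3) (deriv Φ y 3) y := hasDerivAt_pi.mp hd 3
  set a0 := Φ y 0 with ha0
  set a1 := Φ y 1 with ha1
  set a2 := Φ y 2 with ha2
  set a3 := Φ y 3 with ha3
  set d0 := deriv Φ y 0 with hd0
  set d1 := deriv Φ y 1 with hd1
  set d2 := deriv Φ y 2 with hd2
  set d3 := deriv Φ y 3 with hd3
  have hfun : (fun s => (matBtil γ α b13 b14 (Φ s)).mulVec (Φ s)) =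
      fun s => ![α ^ 2 * Φ s 2 + (b13 * (Φ s 2 * Φ s 2) + b14 * (Φ s 3 * Φ s 3)),
                 (γ - 1) / 2 * (Φ s 1 * Φ s 2 / Φ s 0),
                 -(b13 * (Φ s 0 * Φ s 2)) + (γ - 1) / 2 * (Φ s 2 * Φ s 2 / Φ s 0),
                 -(b14 * (Φ s 0 * Φ s 3)) + γ * (Φ s 2 * Φ s 3 / Φ s 0)] := by
    funext s
    have h := hφ1 s
    funext i
    fin_cases i <;>
      simp [matBtil, Matrix.mulVec, dotProduct, Fin.sum_univ_four] <;>
      field_simp <;> ring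
  have hD : HasDerivAt
      (fun s => ![α ^ 2 * Φ s 2 + (b13 * (Φ s 2 * Φ s 2) + b14 * (Φ s 3 * Φ s 3)),
                 (γ - 1) / 2 * (Φ s 1 * Φ s 2 / Φ s 0),
                 -(b13 * (Φ s 0 * Φ s 2)) + (γ - 1) / 2 * (Φ s 2 * Φ s 2 / Φ s 0),
                 -(b14 * (Φ s 0 * Φ s 3)) + γ * (Φ s 2 * Φ s 3 / Φ s 0)])
      (![α ^ 2 * d2 + (b13 * (d2 * a2 + a2 * d2) + b14 * (d3 * a3 + a3 * d3)),
         (γ - 1) / 2 * (((d1 * a2 + a1 * d2) * a0 - a1 * a2 * d0) / a0 ^ 2),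
         -(b13 * (d0 * a2 + a0 * d2)) + (γ - 1) / 2 * (((d2 * a2 + a2 * d2) * a0 - a2 * a2 * d0) / a0 ^ 2),
         -(b14 * (d0 * a3 + a0 * d3)) + γ * (((d2 * a3 + a2 * d3) * a0 - a2 * a3 * d0) / a0 ^ 2)]) y := by
    apply hasDerivAt_pi.mpr
    intro i
    fin_cases i
    · simpa [Pi.add_def] using (h2.const_mul (α ^ 2)).add
        (((h2.mul h2).const_mul b13).add ((h3.mul h3).const_mul b14))
    · simpa using ((h1.mul h2).div h0 hA).const_mul ((γ - 1) / 2)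
    · simpa [Pi.add_def, Pi.neg_def] using (((h0.mul h2).const_mul b13).neg).add
        (((h2.mul h2).div h0 hA).const_mul ((γ - 1) / 2))
    · simpa [Pi.add_def, Pi.neg_def] using (((h0.mul h3).const_mul b14).neg).add
        (((h2.mul h3).div h0 hA).const_mul γ)
  have htr : (matBtil γ α b13 b14 (Φ y))ᵀ =
      !![α ^ 2 * (a2 / a0), 0, -(2 * b13 * a2), -(2 * b14 * a3);
         0, (γ - 1) / 2 * (a2 / a0), 0, 0;
         b13 * a2, 0, b13 * a0 + (γ - 1) / 2 * (a2 / a0), 2 * (γ - 1) * (a3 / a0);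
         b14 * a3, 0, 0, b14 * a0 + (2 - γ) * (a2 / a0)] := by
    ext i j
    fin_cases i <;> fin_cases j <;> simp [matBtil, Matrix.vecHead, Matrix.vecTail, ha0, ha2, ha3]
  rw [hfun, hD.deriv, htr]
  funext i
  fin_cases i <;>
    simp [normP, matB, matBtil, Matrix.mulVec, dotProduct, Matrix.mul_apply,
      Matrix.diagonal, Fin.sum_univ_four, Matrix.transpose_apply, ← ha0, ← ha1, ← ha2, ← ha3,
      ← hd0, ← hd1, ← hd2, ← hd3] <;>
    field_simp <;> ring
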